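/- For integers p, r ≥ 0 and q ≥ 1 with p + q + r = n, the q×q matrix M with entries M_{ij} = binom(p+r, p − j + i) (1 ≤ i, j ≤ q, with the convention binom(m, k) = 0 for k < 0 or k > m) has positive determinant. -/

import Mathlib

/-- Binomial coefficient `binom(m, k)` for `k : ℤ`, with the convention that it vanishes
for `k < 0` (and for `k > m`, via `Nat.choose`). -/
noncomputable def binZ (m : ℕ) (k : ℤ) : ℝ :=
  if 0 ≤ k then (m.choose k.toNat : ℝ) else 0

lemma binZ_succ (m : ℕ) (k : ℤ) : binZ (m+1) k = binZ m k + binZ m (k-1) := by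
  unfold binZ
  rcases lt_trichotomy k 0 with h | h | h
  · rw [if_neg (by omega), if_neg (by omega), if_neg (by omega)]; ring
  · subst h; norm_num
  · rw [if_pos (by omega), if_pos (by omega), if_pos (by omega)]
    have hk : k.toNat = (k-1).toNat + 1 := by omega
    rw [hk, Nat.choose_succ_succ]
    push_cast; ring

lemma binZ_zero_eq (k : ℤ) : binZ 0 k = if k = 0 then 1 else 0 := by
  unfold binZ
  rcases lt_trichotomy k 0 with h | h | h
  · rw [if_neg (by omega), if_neg (by omega)]
  · subst h; norm_num
  · rw [if_pos (by omega), if_neg (by omega), Nat.choose_eq_zero_of_lt (by omega)]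
    norm_num

lemma det_expand (q m : ℕ) (b : Fin q → ℤ) :
    Matrix.det (Matrix.of fun i j : Fin q => binZ (m+1) (b i - j)) =
    ∑ ε : Fin q → Bool, Matrix.det (Matrix.of fun i j : Fin q =>
      binZ m (b i - (if ε i then 1 else 0) - j)) := by
  have h1 : (Matrix.of fun i j : Fin q => binZ (m+1) (b i - j))
      = fun i => ∑ e : Bool, (fun j : Fin q => binZ m (b i - (if e then 1 else 0) - j)) := by
    funext i j
    simp only [Fintype.sum_bool, Matrix.of_apply, Pi.add_apply, binZ_succ]
    norm_num
    ring_nf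
  rw [show Matrix.det (Matrix.of fun i j : Fin q => binZ (m+1) (b i - j))
      = (Matrix.detRowAlternating (R := ℝ)).toMultilinearMap
        (Matrix.of fun i j : Fin q => binZ (m+1) (b i - j)) from rfl, h1]
  rw [MultilinearMap.map_sum]
  rfl

/-- strict monotone integer sequences grow at least linearly -/
lemma gap_lemma {q : ℕ} (b : Fin q → ℤ) (hb : StrictMono b) :
    ∀ (k : ℕ) (i j : Fin q), (j : ℕ) = (i : ℕ) + k → b i + k ≤ b j := by
  intro k
  induction k with
  | zero => intro i j hij; have : i = j := Fin.ext (by omega); subst this; simp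
  | succ k ih =>
    intro i j hij
    have hlt : (i : ℕ) + k < q := by omega
    have h1 : b i + k ≤ b ⟨(i : ℕ) + k, hlt⟩ := ih i ⟨(i : ℕ) + k, hlt⟩ rfl
    have h2 : b ⟨(i : ℕ) + k, hlt⟩ < b j := hb (by simp [Fin.lt_def]; omega)
    push_cast
    omega

/-- base case: m = 0 -/
lemma det_base_nonneg (Q : ℕ) (b : Fin (Q+1) → ℤ) (hb : StrictMono b) :
    0 ≤ Matrix.det (Matrix.of fun i j : Fin (Q+1) => binZ 0 (b i - j)) := by
  by_cases H : ∀ i : Fin (Q+1), 0 ≤ b i ∧ b i < Q + 1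
  · -- all values in range; then b i = i and matrix is the identity
    have hbi : ∀ i : Fin (Q+1), b i = (i : ℤ) := by
      intro i
      have h1 : b 0 + (i : ℕ) ≤ b i := gap_lemma b hb i 0 i (by simp)
      have h2 := gap_lemma b hb (Q - (i : ℕ)) i ⟨Q, by omega⟩ (by simp; omega)
      have h0 := (H 0).1
      have hQ := (H ⟨Q, by omega⟩).2
      have hiQ : (i : ℕ) ≤ Q := by omega
      push_cast at h1 ⊢
      omega
    have : (Matrix.of fun i j : Fin (Q+1) => binZ 0 (b i - j)) = 1 := by
      ext i j
      rw [Matrix.of_apply, binZ_zero_eq, Matrix.one_apply, hbi]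
      by_cases hij : i = j
      · subst hij; simp
      · rw [if_neg hij, if_neg (fun hc => hij (Fin.ext (by omega)))]
    rw [this, Matrix.det_one]
    norm_num
  · -- some row is entirely zero
    push_neg at H
    obtain ⟨i, hi⟩ := H
    have : Matrix.det (Matrix.of fun i j : Fin (Q+1) => binZ 0 (b i - j)) = 0 := by
      apply Matrix.det_eq_zero_of_row_eq_zero i
      intro j
      rw [Matrix.of_apply, binZ_zero_eq, if_neg]
      have hj : (j : ℕ) < Q + 1 := j.isLt
      by_cases h0 : 0 ≤ b i
      · have := hi h0; omega
      · omega
    rw [this]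

/-- if adjacent values are weakly increasing, get nonneg via strict-mono hypothesis or det 0 -/
lemma step_case (Q m : ℕ) (b' : Fin (Q+1) → ℤ)
    (hadj : ∀ i : Fin Q, b' i.castSucc ≤ b' i.succ)
    (H : ∀ b'' : Fin (Q+1) → ℤ, StrictMono b'' →
      0 ≤ Matrix.det (Matrix.of fun i j : Fin (Q+1) => binZ m (b'' i - j))) :
    0 ≤ Matrix.det (Matrix.of fun i j : Fin (Q+1) => binZ m (b' i - j)) := by
  by_cases hmono : StrictMono b'
  · exact H b' hmono
  · rw [Fin.strictMono_iff_lt_succ] at hmono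
    push_neg at hmono
    obtain ⟨i, hi⟩ := hmono
    have heq : b' i.castSucc = b' i.succ := le_antisymm (hadj i) hi
    have : Matrix.det (Matrix.of fun i j : Fin (Q+1) => binZ m (b' i - j)) = 0 := by
      apply Matrix.det_zero_of_row_eq (i := i.castSucc) (j := i.succ)
        (Fin.castSucc_lt_succ : i.castSucc < i.succ).ne
      funext j
      simp only [Matrix.of_apply, heq]
    rw [this]

lemma det_binZ_nonneg (Q : ℕ) (m : ℕ) (b : Fin (Q+1) → ℤ) (hb : StrictMono b) :
    0 ≤ Matrix.det (Matrix.of fun i j : Fin (Q+1) => binZ m (b i - j)) := by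
  induction m generalizing b with
  | zero => exact det_base_nonneg Q b hb
  | succ m ih =>
    rw [det_expand]
    apply Finset.sum_nonneg
    intro ε _
    have : (Matrix.of fun i j : Fin (Q+1) => binZ m (b i - (if ε i then 1 else 0) - j))
        = Matrix.of fun i j : Fin (Q+1) =>
            binZ m ((fun i => b i - (if ε i then 1 else 0)) i - j) := rfl
    rw [this]
    apply step_case Q m _ _ (fun b'' hb'' => ih b'' hb'')
    intro i
    have h1 : b i.castSucc < b i.succ := hb (Fin.castSucc_lt_succ : i.castSucc < i.succ)
    by_cases h2 : ε i.castSucc <;> by_cases h3 : ε i.succ <;> simp [h2, h3] <;> omega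

lemma det_binZ_pos (Q : ℕ) (m : ℕ) (b : Fin (Q+1) → ℤ) (hb : StrictMono b)
    (hbd : ∀ i : Fin (Q+1), (i : ℤ) ≤ b i ∧ b i ≤ (i : ℤ) + m) :
    0 < Matrix.det (Matrix.of fun i j : Fin (Q+1) => binZ m (b i - j)) := by
  induction m generalizing b with
  | zero =>
    have hbi : ∀ i : Fin (Q+1), b i = (i : ℤ) := by
      intro i; have := hbd i; omega
    have : (Matrix.of fun i j : Fin (Q+1) => binZ 0 (b i - j)) = 1 := by
      ext i j
      rw [Matrix.of_apply, binZ_zero_eq, Matrix.one_apply, hbi]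
      by_cases hij : i = j
      · subst hij; simp
      · rw [if_neg hij, if_neg (fun hc => hij (Fin.ext (by omega)))]
    rw [this, Matrix.det_one]; norm_num
  | succ m ih =>
    rw [det_expand]
    -- chosen branch
    set ε₀ : Fin (Q+1) → Bool := fun i => decide ((i : ℤ) < b i) with hε₀
    set b₀ : Fin (Q+1) → ℤ := fun i => b i - (if ε₀ i then 1 else 0) with hb₀
    have hb₀i : ∀ i, b₀ i = if (i : ℤ) < b i then b i - 1 else b i := by
      intro i
      simp only [hb₀, hε₀, decide_eq_true_eq]
      split_ifs <;> omega
    have hb₀bd : ∀ i : Fin (Q+1), (i : ℤ) ≤ b₀ i ∧ b₀ i ≤ (i : ℤ) + m := by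
      intro i
      have h1 := hbd i
      rw [hb₀i]
      by_cases h : (i : ℤ) < b i <;> simp [h] <;> omega
    have hb₀mono : StrictMono b₀ := by
      rw [Fin.strictMono_iff_lt_succ]
      intro i
      have h1 : b i.castSucc < b i.succ := hb (Fin.castSucc_lt_succ : i.castSucc < i.succ)
      have h2 := hbd i.castSucc
      have h3 := hbd i.succ
      have hcs : ((i.succ : Fin (Q+1)) : ℤ) = ((i.castSucc : Fin (Q+1)) : ℤ) + 1 := by
        simp [Fin.coe_castSucc, Fin.val_succ]
      rw [hb₀i, hb₀i]
      by_cases hA : ((i.castSucc : Fin (Q+1)) : ℤ) < b i.castSucc <;>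
        by_cases hB : ((i.succ : Fin (Q+1)) : ℤ) < b i.succ <;> simp [hA, hB] <;> omega
    have hpos : 0 < Matrix.det (Matrix.of fun i j : Fin (Q+1) =>
        binZ m (b i - (if ε₀ i then 1 else 0) - j)) := by
      have : (Matrix.of fun i j : Fin (Q+1) => binZ m (b i - (if ε₀ i then 1 else 0) - j))
          = Matrix.of fun i j : Fin (Q+1) => binZ m (b₀ i - j) := rfl
      rw [this]
      exact ih b₀ hb₀mono hb₀bd
    have hterm : ∀ ε : Fin (Q+1) → Bool, 0 ≤ Matrix.det (Matrix.of fun i j : Fin (Q+1) =>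
        binZ m (b i - (if ε i then 1 else 0) - j)) := by
      intro ε
      have : (Matrix.of fun i j : Fin (Q+1) => binZ m (b i - (if ε i then 1 else 0) - j))
          = Matrix.of fun i j : Fin (Q+1) =>
              binZ m ((fun i => b i - (if ε i then 1 else 0)) i - j) := rfl
      rw [this]
      apply step_case Q m _ _ (fun b'' hb'' => det_binZ_nonneg Q m b'' hb'')
      intro i
      have h1 : b i.castSucc < b i.succ := hb (Fin.castSucc_lt_succ : i.castSucc < i.succ)
      by_cases h2 : ε i.castSucc <;> by_cases h3 : ε i.succ <;> simp [h2, h3] <;> omega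
    calc (0 : ℝ) < Matrix.det (Matrix.of fun i j : Fin (Q+1) =>
          binZ m (b i - (if ε₀ i then 1 else 0) - j)) := hpos
      _ ≤ _ := Finset.single_le_sum (f := fun ε : Fin (Q+1) → Bool =>
          Matrix.det (Matrix.of fun i j : Fin (Q+1) =>
            binZ m (b i - (if ε i then 1 else 0) - j)))
          (fun ε _ => hterm ε) (Finset.mem_univ ε₀)

/-- for `p, r ≥ 0`, `q ≥ 1` with `p + q + r = n`, the `q×q` matrix with
entries `binom(p+r, p − j + i)` has positive determinant. -/
theorem binomial_det_pos (n p q r : ℕ) (hq : 1 ≤ q) (h : p + q + r = n) :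
    0 < Matrix.det (Matrix.of fun i j : Fin q =>
      binZ (p + r) ((p : ℤ) - (j : ℤ) + (i : ℤ))) := by
  obtain ⟨Q, rfl⟩ : ∃ Q, q = Q + 1 := ⟨q - 1, by omega⟩
  have hmat : (Matrix.of fun i j : Fin (Q+1) => binZ (p + r) ((p : ℤ) - (j : ℤ) + (i : ℤ)))
      = Matrix.of fun i j : Fin (Q+1) => binZ (p + r) (((fun i : Fin (Q+1) => (p : ℤ) + i) i) - j) := by
    ext i j
    simp only [Matrix.of_apply]
    congr 1
    ring
  rw [hmat]
  apply det_binZ_pos Q (p + r) (fun i => (p : ℤ) + i)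
  · intro i j hij
    have h1 : (i : ℤ) < (j : ℤ) := by exact_mod_cast hij
    show (p : ℤ) + i < (p : ℤ) + j
    omega
  · intro i
    refine ⟨?_, ?_⟩
    · show (i : ℤ) ≤ (p : ℤ) + i
      omega
    · show (p : ℤ) + i ≤ (i : ℤ) + (p + r : ℕ)
      push_cast
      omega
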